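/- For real numbers x_1,...,x_N and any integer k with 2 ≤ k ≤ N, the sum over ordered pairs i≠j of e_{k-1}^{N-1}(x with coordinates i removed)/(x_i - x_j) equals -((N-k+2)(N-k+1)/2)·e_{k-2}^N(x), where e_n^m denotes the elementary symmetric polynomial of degree n in m variables, provided all x_i are pairwise distinct. -/

import Mathlib

open Finset

/-- The elementary symmetric polynomial of degree `k` in the variables indexed by `S`. -/
noncomputable def esym {N : ℕ} (k : ℕ) (S : Finset (Fin N)) (x : Fin N → ℝ) : ℝ :=
  ∑ s ∈ Finset.powersetCard k S, ∏ i ∈ s, x i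

lemma esym_insert {N m : ℕ} (x : Fin N → ℝ) (a : Fin N) (S : Finset (Fin N)) (ha : a ∉ S) :
    esym (m + 1) (insert a S) x = esym (m + 1) S x + x a * esym m S x := by
  unfold esym
  rw [powersetCard_succ_insert ha, sum_union, sum_image, mul_sum]
  · congr 1
    refine sum_congr rfl fun s hs => ?_
    rw [mem_powersetCard] at hs
    rw [prod_insert (fun h => ha (hs.1 h))]
  · intro s hs t ht hst
    rw [Finset.mem_coe, mem_powersetCard] at hs ht
    have hsa : a ∉ s := fun h => ha (hs.1 h)
    have hta : a ∉ t := fun h => ha (ht.1 h)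
    have := congrArg (Finset.erase · a) hst
    simpa [erase_insert hsa, erase_insert hta] using this
  · rw [disjoint_right]
    intro s hs hs'
    rw [mem_image] at hs
    obtain ⟨t, ht, rfl⟩ := hs
    rw [mem_powersetCard] at hs' ht
    exact ha (hs'.1 (mem_insert_self a t))

lemma esym_erase_sub {N m : ℕ} (x : Fin N → ℝ) (i j : Fin N) (hij : i ≠ j) :
    esym (m + 1) (univ.erase i) x - esym (m + 1) (univ.erase j) x
      = (x j - x i) * esym m ((univ.erase i).erase j) x := by
  have hj : j ∈ (univ : Finset (Fin N)).erase i := mem_erase.2 ⟨hij.symm, mem_univ j⟩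
  have hi : i ∈ (univ : Finset (Fin N)).erase j := mem_erase.2 ⟨hij, mem_univ i⟩
  set T := (univ.erase i).erase j with hT
  have h1 : (univ : Finset (Fin N)).erase i = insert j T := (insert_erase hj).symm
  have h2 : (univ : Finset (Fin N)).erase j = insert i T := by
    rw [hT, erase_right_comm]; exact (insert_erase hi).symm
  have hjT : j ∉ T := notMem_erase _ _
  have hiT : i ∉ T := by rw [hT, erase_right_comm]; exact notMem_erase _ _
  rw [h1, h2, esym_insert x j T hjT, esym_insert x i T hiT]
  ring

lemma esym_erase_filter {N m : ℕ} (x : Fin N → ℝ) (i j : Fin N) :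
    esym m ((univ.erase i).erase j) x
      = ∑ s ∈ powersetCard m (univ : Finset (Fin N)),
          if i ∉ s ∧ j ∉ s then ∏ a ∈ s, x a else 0 := by
  unfold esym
  rw [← sum_filter]
  congr 1
  ext s
  simp only [mem_filter, mem_powersetCard, subset_erase, subset_univ, true_and]
  tauto

lemma count_sum {N m : ℕ} (x : Fin N → ℝ) (hm : m + 2 ≤ N) :
    ∑ i : Fin N, ∑ j ∈ univ.erase i, esym m ((univ.erase i).erase j) x
      = ((N - m) * (N - m - 1) : ℕ) * esym m univ x := by
  simp only [esym_erase_filter]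
  rw [show ∑ i : Fin N, ∑ j ∈ univ.erase i, ∑ s ∈ powersetCard m (univ : Finset (Fin N)),
        (if i ∉ s ∧ j ∉ s then ∏ a ∈ s, x a else 0)
      = ∑ s ∈ powersetCard m (univ : Finset (Fin N)), ∑ i : Fin N, ∑ j ∈ univ.erase i,
        (if i ∉ s ∧ j ∉ s then ∏ a ∈ s, x a else 0) by
    rw [Finset.sum_comm]
    exact Finset.sum_congr rfl fun s _ => Finset.sum_comm]
  unfold esym
  rw [mul_sum]
  refine sum_congr rfl fun s hs => ?_
  rw [mem_powersetCard] at hs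
  have hcard : sᶜ.card = N - m := by
    rw [card_compl, hs.2]; simp
  have key : ∀ i : Fin N, i ∉ s →
      (∑ j ∈ univ.erase i, if i ∉ s ∧ j ∉ s then ∏ a ∈ s, x a else 0)
        = ((N - m - 1 : ℕ) : ℝ) * ∏ a ∈ s, x a := by
    intro i hi
    have : ∀ j, (if i ∉ s ∧ j ∉ s then ∏ a ∈ s, x a else 0)
        = if j ∉ s then ∏ a ∈ s, x a else 0 := by
      intro j; simp [hi]
    simp only [this]
    rw [← sum_filter, sum_const, nsmul_eq_mul]
    congr 2
    have : (univ.erase i).filter (fun j => j ∉ s) = sᶜ.erase i := by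
      ext j; simp [mem_compl, and_comm]
    rw [this, card_erase_of_mem (mem_compl.2 hi), hcard]
  calc ∑ i : Fin N, ∑ j ∈ univ.erase i, (if i ∉ s ∧ j ∉ s then ∏ a ∈ s, x a else 0)
      = ∑ i : Fin N, if i ∉ s then ((N - m - 1 : ℕ) : ℝ) * ∏ a ∈ s, x a else 0 := by
        refine sum_congr rfl fun i _ => ?_
        by_cases hi : i ∈ s
        · simp [hi]
        · rw [key i hi]; simp [hi]
    _ = ((N - m) * (N - m - 1) : ℕ) * ∏ a ∈ s, x a := by
        rw [← sum_filter, sum_const]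
        have : (univ : Finset (Fin N)).filter (fun i => i ∉ s) = sᶜ := by
          ext i; simp
        rw [this, hcard, nsmul_eq_mul]
        push_cast
        ring

theorem stmt0 {N : ℕ} (x : Fin N → ℝ)
    (hdist : ∀ i j : Fin N, i ≠ j → x i ≠ x j)
    (k : ℕ) (hk2 : 2 ≤ k) (hkN : k ≤ N) :
    ∑ i : Fin N, ∑ j ∈ (univ : Finset (Fin N)).erase i,
        esym (k - 1) ((univ : Finset (Fin N)).erase i) x / (x i - x j)
      = -(((N : ℝ) - k + 2) * ((N : ℝ) - k + 1) / 2) * esym (k - 2) univ x := by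
  obtain ⟨m, rfl⟩ : ∃ m, k = m + 2 := ⟨k - 2, by omega⟩
  have hm : m + 2 ≤ N := hkN
  simp only [show m + 2 - 1 = m + 1 from rfl, show m + 2 - 2 = m from rfl]
  have hswap : (∑ i : Fin N, ∑ j ∈ (univ : Finset (Fin N)).erase i,
        esym (m + 1) ((univ : Finset (Fin N)).erase i) x / (x i - x j))
      = ∑ i : Fin N, ∑ j ∈ (univ : Finset (Fin N)).erase i,
        esym (m + 1) ((univ : Finset (Fin N)).erase j) x / (x j - x i) :=
    Finset.sum_comm' (fun i j => by simp [mem_erase, ne_comm, eq_comm, and_comm]) ..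
  have h2S : 2 * (∑ i : Fin N, ∑ j ∈ (univ : Finset (Fin N)).erase i,
        esym (m + 1) ((univ : Finset (Fin N)).erase i) x / (x i - x j))
      = -(((N - m) * (N - m - 1) : ℕ) : ℝ) * esym m univ x := by
    rw [two_mul]
    nth_rewrite 2 [hswap]
    rw [← Finset.sum_add_distrib]
    have step : ∀ i : Fin N, (∑ j ∈ (univ : Finset (Fin N)).erase i,
          esym (m + 1) ((univ : Finset (Fin N)).erase i) x / (x i - x j))
        + (∑ j ∈ (univ : Finset (Fin N)).erase i,
          esym (m + 1) ((univ : Finset (Fin N)).erase j) x / (x j - x i))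
        = ∑ j ∈ (univ : Finset (Fin N)).erase i,
          -(esym m ((univ.erase i).erase j) x) := by
      intro i
      rw [← Finset.sum_add_distrib]
      refine sum_congr rfl fun j hj => ?_
      have hij : i ≠ j := (mem_erase.1 hj).1.symm
      have hd : x i - x j ≠ 0 := sub_ne_zero.2 (hdist i j hij)
      have hkey := esym_erase_sub (m := m) x i j hij
      rw [show x j - x i = -(x i - x j) by ring, div_neg, ← sub_eq_add_neg,
        div_sub_div_same, hkey, show x j - x i = -(x i - x j) by ring, neg_mul,
        neg_div, mul_comm (x i - x j), mul_div_assoc, div_self hd, mul_one]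
    simp only [step, Finset.sum_neg_distrib]
    rw [count_sum x hm]
    ring
  have hC : (((N - m) * (N - m - 1) : ℕ) : ℝ)
      = ((N : ℝ) - (m + 2) + 2) * ((N : ℝ) - (m + 2) + 1) := by
    have h1 : m ≤ N := by omega
    have h2 : 1 ≤ N - m := by omega
    push_cast [Nat.cast_sub h1, Nat.cast_sub h2]
    ring
  rw [hC] at h2S
  push_cast at h2S ⊢
  linear_combination h2S / 2
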